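/- Let M_b ∈ {0,1}^{m×n} be the adjacency matrix of a bipartite graph with edge set E (|E| = number of ones in M_b), and for d > 0 set M_d = (1+d)M_b - d·J, where J is the all-ones matrix. If d ≥ √|E|, then for any optimal solution (v, w), v ≥ 0, w ≥ 0, of min ||M_d - vwᵀ||_F², the product vwᵀ is a 0/1 matrix satisfying vwᵀ ≤ M_b entrywise. -/

import Mathlib

open Finset
set_option maxHeartbeats 1000000


lemma quad_min {W a t0 : ℝ} (hW : 0 < W) (ht0 : 0 < t0)
    (h : ∀ t, 0 ≤ t → W * t0 ^ 2 - 2 * a * t0 ≤ W * t ^ 2 - 2 * a * t) : a = W * t0 := by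
  by_contra hne
  set c : ℝ := 2 * (W * t0 - a) with hc
  have hcne : c ≠ 0 := by
    intro h0; apply hne; rw [hc] at h0; linarith
  have hcpos : 0 < |c| := abs_pos.mpr hcne
  have hc2 : (0:ℝ) < c ^ 2 := by positivity
  set η : ℝ := min (1 / (2 * W)) (t0 / |c|) with hη
  have hηpos : 0 < η := lt_min (by positivity) (by positivity)
  have hηW : W * η ≤ 1 / 2 := by
    have h1 : η ≤ 1 / (2 * W) := min_le_left _ _
    have : W * η ≤ W * (1 / (2 * W)) := by nlinarith
    calc W * η ≤ W * (1 / (2 * W)) := this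
    _ = 1 / 2 := by field_simp
  have hηt0 : |c| * η ≤ t0 := by
    have h1 : η ≤ t0 / |c| := min_le_right _ _
    have : |c| * η ≤ |c| * (t0 / |c|) := by nlinarith
    calc |c| * η ≤ |c| * (t0 / |c|) := this
    _ = t0 := by field_simp
  have hnn : 0 ≤ t0 - c * η := by
    have : c * η ≤ |c| * η := by nlinarith [le_abs_self c]
    linarith
  have hkey := h (t0 - c * η) hnn
  have ha : 2 * a = 2 * W * t0 - c := by rw [hc]; ring
  nlinarith [hkey, ha, mul_pos hc2 hηpos, hηW]


lemma expand_row {n : ℕ} (A : Fin n → ℝ) (y : Fin n → ℝ) (t : ℝ) :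
    ∑ j, (A j - t * y j) ^ 2
      = (∑ j, (A j) ^ 2) - 2 * t * (∑ j, A j * y j) + t ^ 2 * ∑ j, (y j) ^ 2 := by
  have h1 : ∀ j : Fin n, (A j - t * y j) ^ 2
      = (A j) ^ 2 - 2 * t * (A j * y j) + t ^ 2 * (y j) ^ 2 := by intro j; ring
  simp_rw [h1, Finset.sum_add_distrib, Finset.sum_sub_distrib, ← Finset.mul_sum]

lemma row_reduce {m n : ℕ} (Md : Fin m → Fin n → ℝ) (v : Fin m → ℝ) (w : Fin n → ℝ)
    (hv : ∀ i, 0 ≤ v i) (hw : ∀ j, 0 ≤ w j)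
    (hopt : ∀ (v' : Fin m → ℝ) (w' : Fin n → ℝ), (∀ i, 0 ≤ v' i) → (∀ j, 0 ≤ w' j) →
      ∑ i, ∑ j, (Md i j - v i * w j) ^ 2 ≤ ∑ i, ∑ j, (Md i j - v' i * w' j) ^ 2)
    (i : Fin m) (t : ℝ) (ht : 0 ≤ t) :
    ∑ j, (Md i j - v i * w j) ^ 2 ≤ ∑ j, (Md i j - t * w j) ^ 2 := by
  classical
  have h := hopt (Function.update v i t) w
    (fun i' => by
      rcases eq_or_ne i' i with h | h
      · subst h; simp [ht]
      · simp [Function.update_of_ne h, hv i']) hw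
  have split : ∀ x : Fin m → ℝ, (∑ i', ∑ j, (Md i' j - x i' * w j) ^ 2)
      = (∑ i' ∈ univ.erase i, ∑ j, (Md i' j - x i' * w j) ^ 2)
        + ∑ j, (Md i j - x i * w j) ^ 2 :=
    fun x => (Finset.sum_erase_add _ _ (mem_univ i)).symm
  rw [split v, split (Function.update v i t)] at h
  have he : (∑ i' ∈ univ.erase i, ∑ j, (Md i' j - Function.update v i t i' * w j) ^ 2)
      = ∑ i' ∈ univ.erase i, ∑ j, (Md i' j - v i' * w j) ^ 2 := by
    refine Finset.sum_congr rfl fun i' hi' => ?_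
    rw [Function.update_of_ne (Finset.mem_erase.mp hi').1]
  rw [he] at h
  rw [Function.update_self] at h
  linarith


lemma max_vec {k : ℕ} (g u : Fin k → ℝ) (s : ℝ) (hspos : 0 < s)
    (hu2 : ∑ i, u i ^ 2 = 1) (hug : ∑ i, u i * g i = s)
    (htest : ∀ x : EuclideanSpace ℝ (Fin k),
      x ∈ Metric.sphere (0 : EuclideanSpace ℝ (Fin k)) 1 → ∑ i, x i * g i ≤ s) :
    ∀ i, g i = s * u i := by
  classical
  set G : ℝ := ∑ i, (g i) ^ 2 with hGdef
  have hgu_comm : ∑ i, g i * u i = s := by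
    rw [← hug]; exact Finset.sum_congr rfl fun i _ => mul_comm _ _
  have hexp : ∑ i, (g i - s * u i) ^ 2 = G - s ^ 2 := by
    rw [expand_row g u s, hgu_comm, hu2]; ring
  have hGs : s ^ 2 ≤ G := by
    have h0 : 0 ≤ ∑ i, (g i - s * u i) ^ 2 := Finset.sum_nonneg fun i _ => sq_nonneg _
    linarith [hexp]
  have hGpos : 0 < G := lt_of_lt_of_le (by positivity) hGs
  set r : ℝ := Real.sqrt G with hrdef
  have hr2 : r ^ 2 = G := Real.sq_sqrt hGpos.le
  have hrpos : 0 < r := Real.sqrt_pos.mpr hGpos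
  set xg : EuclideanSpace ℝ (Fin k) := WithLp.toLp 2 (fun i => r⁻¹ * g i) with hxgdef
  have hxg_mem : xg ∈ Metric.sphere (0 : EuclideanSpace ℝ (Fin k)) 1 := by
    rw [mem_sphere_zero_iff_norm, EuclideanSpace.norm_eq]
    have h1 : ∑ i, ‖xg i‖ ^ 2 = 1 := by
      have : ∀ i, ‖xg i‖ ^ 2 = r⁻¹ ^ 2 * (g i) ^ 2 := by
        intro i
        rw [Real.norm_eq_abs, sq_abs]
        show (r⁻¹ * g i) ^ 2 = _
        ring
      rw [Finset.sum_congr rfl fun i _ => this i, ← Finset.mul_sum, ← hGdef, ← hr2]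
      field_simp
    rw [h1, Real.sqrt_one]
  have hrs : r ≤ s := by
    have h := htest xg hxg_mem
    have h2 : ∑ i, xg i * g i = r := by
      have : ∀ i, xg i * g i = r⁻¹ * (g i) ^ 2 := by
        intro i; show r⁻¹ * g i * g i = _; ring
      rw [Finset.sum_congr rfl fun i _ => this i, ← Finset.mul_sum, ← hGdef, ← hr2]
      field_simp
    rwa [h2] at h
  have hGeq : G = s ^ 2 := le_antisymm (by nlinarith) hGs
  have hzero : ∑ i, (g i - s * u i) ^ 2 = 0 := by rw [hexp, hGeq]; ring
  intro i
  have := (Finset.sum_eq_zero_iff_of_nonneg (fun i _ => sq_nonneg (g i - s * u i))).mp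
    hzero i (mem_univ i)
  have h3 : g i - s * u i = 0 := by
    have := sq_eq_zero_iff.mp this
    exact this
  linarith
lemma expand_f {m n : ℕ} (Md : Fin m → Fin n → ℝ) (x : Fin m → ℝ) (y : Fin n → ℝ) :
    ∑ i, ∑ j, (Md i j - x i * y j) ^ 2
      = (∑ i, ∑ j, (Md i j) ^ 2) - 2 * (∑ i, ∑ j, Md i j * (x i * y j))
        + (∑ i, (x i) ^ 2) * (∑ j, (y j) ^ 2) := by
  have h1 : ∀ i j, (Md i j - x i * y j) ^ 2
      = (Md i j) ^ 2 - 2 * (Md i j * (x i * y j)) + (x i) ^ 2 * (y j) ^ 2 := by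
    intro i j; ring
  simp_rw [h1, Finset.sum_add_distrib, Finset.sum_sub_distrib, ← Finset.mul_sum,
    ← Finset.sum_mul]


lemma crux {m n : ℕ} (Mb : Fin m → Fin n → ℝ)
    (hbin : ∀ i j, Mb i j = 0 ∨ Mb i j = 1)
    (d : ℝ) (hd0 : 0 < d)
    (Md : Fin m → Fin n → ℝ) (hMd : ∀ i j, Md i j = (1 + d) * Mb i j - d)
    (hdE : Real.sqrt (∑ i, ∑ j, Mb i j) ≤ d)
    (v : Fin m → ℝ) (w : Fin n → ℝ) (hv : ∀ i, 0 ≤ v i) (hw : ∀ j, 0 ≤ w j)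
    (hopt : ∀ (v' : Fin m → ℝ) (w' : Fin n → ℝ), (∀ i, 0 ≤ v' i) → (∀ j, 0 ≤ w' j) →
      ∑ i, ∑ j, (Md i j - v i * w j) ^ 2 ≤ ∑ i, ∑ j, (Md i j - v' i * w' j) ^ 2)
    (V W : ℝ) (hV : V = ∑ i, (v i) ^ 2) (hW : W = ∑ j, (w j) ^ 2)
    (hstatv : ∀ i, 0 < v i → ∑ j, Md i j * w j = W * v i)
    (hstatw : ∀ j, 0 < w j → ∑ i, Md i j * v i = V * w j)
    (i0 : Fin m) (j0 : Fin n) (hv0 : 0 < v i0) (hw0 : 0 < w j0) (hM0 : Mb i0 j0 = 0) :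
    False := by
  classical
  have hVpos : 0 < V := by
    rw [hV]
    calc (0:ℝ) < v i0 ^ 2 := by positivity
    _ ≤ _ := Finset.single_le_sum (f := fun i => v i ^ 2) (fun i _ => sq_nonneg _) (mem_univ i0)
  have hWpos : 0 < W := by
    rw [hW]
    calc (0:ℝ) < w j0 ^ 2 := by positivity
    _ ≤ _ := Finset.single_le_sum (f := fun j => w j ^ 2) (fun j _ => sq_nonneg _) (mem_univ j0)
  have hvz : ∀ i, ¬ 0 < v i → v i = 0 := fun i h => le_antisymm (not_lt.mp h) (hv i)
  have hwz : ∀ j, ¬ 0 < w j → w j = 0 := fun j h => le_antisymm (not_lt.mp h) (hw j)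
  have hMd0 : Md i0 j0 = -d := by rw [hMd, hM0]; ring
  set N : Fin m → Fin n → ℝ := fun i j => if 0 < v i ∧ 0 < w j then Md i j else 0 with hNdef
  have hN1 : ∀ i, ∑ j, N i j * w j = W * v i := by
    intro i
    by_cases hvi : 0 < v i
    · have he : ∀ j, N i j * w j = Md i j * w j := by
        intro j
        by_cases hwj : 0 < w j
        · simp [hNdef, hvi, hwj]
        · rw [hwz j hwj]; ring
      rw [Finset.sum_congr rfl fun j _ => he j, hstatv i hvi]
    · have he : ∀ j, N i j * w j = 0 := by intro j; simp [hNdef, hvi]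
      rw [Finset.sum_congr rfl fun j _ => he j, hvz i hvi]
      simp
  have hN2 : ∀ j, ∑ i, N i j * v i = V * w j := by
    intro j
    by_cases hwj : 0 < w j
    · have he : ∀ i, N i j * v i = Md i j * v i := by
        intro i
        by_cases hvi : 0 < v i
        · simp [hNdef, hvi, hwj]
        · rw [hvz i hvi]; ring
      rw [Finset.sum_congr rfl fun i _ => he i, hstatw j hwj]
    · have he : ∀ i, N i j * v i = 0 := by intro i; simp [hNdef, hwj]
      rw [Finset.sum_congr rfl fun i _ => he i, hwz j hwj]
      simp
  have hN3 : ∑ i, ∑ j, N i j * (v i * w j) = V * W := by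
    have he : ∀ i : Fin m, ∑ j, N i j * (v i * w j) = v i * (W * v i) := by
      intro i
      rw [← hN1 i, Finset.mul_sum]
      exact Finset.sum_congr rfl fun j _ => by ring
    rw [Finset.sum_congr rfl fun i _ => he i]
    have : ∑ i, v i * (W * v i) = (∑ i, (v i)^2) * W := by
      rw [Finset.sum_mul]; exact Finset.sum_congr rfl fun i _ => by ring
    rw [this, ← hV, mul_comm]
  -- the CS bound: V*W < d^2
  set P : Fin m → Fin n → ℝ := fun i j => if 0 < v i ∧ 0 < w j ∧ Mb i j = 1 then 1 else 0 with hPdef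
  have hEd : (∑ i, ∑ j, Mb i j) ≤ d ^ 2 := by
    have hS : 0 ≤ ∑ i, ∑ j, Mb i j := by
      apply Finset.sum_nonneg; intro i _; apply Finset.sum_nonneg; intro j _
      rcases hbin i j with h | h <;> rw [h] <;> norm_num
    calc (∑ i, ∑ j, Mb i j) = (Real.sqrt (∑ i, ∑ j, Mb i j))^2 := (Real.sq_sqrt hS).symm
    _ ≤ d ^ 2 := by nlinarith only [hdE, Real.sqrt_nonneg (∑ i, ∑ j, Mb i j)]
  have hPsq : ∑ i, ∑ j, (P i j) ^ 2 ≤ d ^ 2 := by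
    refine le_trans ?_ hEd
    apply Finset.sum_le_sum; intro i _; apply Finset.sum_le_sum; intro j _
    by_cases h : 0 < v i ∧ 0 < w j ∧ Mb i j = 1
    · simp [hPdef, h, h.2.2]
    · simp only [hPdef, if_neg h]
      rcases hbin i j with h' | h' <;> rw [h'] <;> norm_num
  have hstrict : V * W < ∑ i, ∑ j, P i j * (v i * w j) := by
    rw [← hN3]
    have hle : ∀ i j, N i j * (v i * w j) ≤ P i j * (v i * w j) := by
      intro i j
      by_cases h1 : 0 < v i
      · by_cases h2 : 0 < w j
        · rcases hbin i j with hb | hb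
          · have : N i j = -d := by simp [hNdef, h1, h2, hMd, hb]
            have hP : P i j = 0 := by simp [hPdef, hb]
            rw [this, hP]
            nlinarith only [mul_pos h1 h2, hd0]
          · have : N i j = 1 := by simp [hNdef, h1, h2, hMd, hb]
            have hP : P i j = 1 := by simp [hPdef, h1, h2, hb]
            rw [this, hP]
        · rw [hwz j h2]; simp
      · rw [hvz i h1]; simp
    apply Finset.sum_lt_sum (fun i _ => Finset.sum_le_sum fun j _ => hle i j)
    refine ⟨i0, mem_univ i0, Finset.sum_lt_sum (fun j _ => hle i0 j) ⟨j0, mem_univ j0, ?_⟩⟩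
    have hN00 : N i0 j0 = -d := by simp [hNdef, hv0, hw0, hMd0]
    have hP00 : P i0 j0 = 0 := by simp [hPdef, hM0]
    rw [hN00, hP00]
    nlinarith only [mul_pos (mul_pos hv0 hw0) hd0]
  have hCS : (∑ i, ∑ j, P i j * (v i * w j)) ^ 2 ≤ (∑ i, ∑ j, (P i j) ^ 2) * (V * W) := by
    have h := Finset.sum_mul_sq_le_sq_mul_sq Finset.univ (fun p : Fin m × Fin n => P p.1 p.2)
      (fun p : Fin m × Fin n => v p.1 * w p.2)
    rw [Fintype.sum_prod_type, Fintype.sum_prod_type, Fintype.sum_prod_type] at h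
    have hvw : ∑ i, ∑ j, (v i * w j) ^ 2 = V * W := by
      rw [hV, hW, Finset.sum_mul_sum]
      exact Finset.sum_congr rfl fun i _ => Finset.sum_congr rfl fun j _ => by ring
    rw [hvw] at h
    exact h
  have hVWd : V * W < d ^ 2 := by
    set Q := ∑ i, ∑ j, P i j * (v i * w j)
    have hVWpos : 0 < V * W := mul_pos hVpos hWpos
    by_contra hcon
    push_neg at hcon
    have h1 : (V * W) * (V * W) < Q * Q := mul_self_lt_mul_self hVWpos.le hstrict
    have h2 : (∑ i, ∑ j, (P i j) ^ 2) * (V * W) ≤ d ^ 2 * (V * W) :=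
      mul_le_mul_of_nonneg_right hPsq hVWpos.le
    have h3 : d ^ 2 * (V * W) ≤ (V * W) * (V * W) :=
      mul_le_mul_of_nonneg_right hcon hVWpos.le
    nlinarith only [hCS, h1, h2, h3]
  -- maximizer of the bilinear form over the product of unit spheres
  set B : EuclideanSpace ℝ (Fin m) × EuclideanSpace ℝ (Fin n) → ℝ :=
    fun p => ∑ i, ∑ j, N i j * (p.1 i * p.2 j) with hBdef
  have hBcont : Continuous B := by
    apply continuous_finset_sum; intro i _
    apply continuous_finset_sum; intro j _
    exact continuous_const.mul
      (((PiLp.continuous_apply 2 _ i).comp continuous_fst).mul ((PiLp.continuous_apply 2 _ j).comp continuous_snd))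
  set K : Set (EuclideanSpace ℝ (Fin m) × EuclideanSpace ℝ (Fin n)) :=
    (Metric.sphere 0 1) ×ˢ (Metric.sphere 0 1) with hKdef
  have hKc : IsCompact K := (isCompact_sphere _ _).prod (isCompact_sphere _ _)
  have hKne : K.Nonempty := by
    refine ⟨(EuclideanSpace.single i0 (1:ℝ), EuclideanSpace.single j0 (1:ℝ)), ?_, ?_⟩ <;>
      simp [EuclideanSpace.norm_single]
  obtain ⟨p, hpK, hpmax⟩ := hKc.exists_isMaxOn hKne hBcont.continuousOn
  set u : Fin m → ℝ := fun i => p.1 i with hudef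
  set z : Fin n → ℝ := fun j => p.2 j with hzdef
  set s : ℝ := B p with hsdef
  have hnorm_sq : ∀ {k : ℕ} (x : EuclideanSpace ℝ (Fin k)), x ∈ Metric.sphere (0 : EuclideanSpace ℝ (Fin k)) 1 → ∑ i, (x i) ^ 2 = 1 := by
    intro k x hx
    have h1 : ‖x‖ = 1 := by simpa using hx
    rw [EuclideanSpace.norm_eq] at h1
    have := Real.sqrt_eq_one.mp h1
    simpa [Real.norm_eq_abs, sq_abs] using this
  have hu2 : ∑ i, (u i) ^ 2 = 1 := hnorm_sq p.1 hpK.1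
  have hz2 : ∑ j, (z j) ^ 2 = 1 := hnorm_sq p.2 hpK.2
  have hq0mem : (EuclideanSpace.single i0 (-1:ℝ), EuclideanSpace.single j0 (1:ℝ)) ∈ K := by
    constructor <;> simp [EuclideanSpace.norm_single]
  have hN00 : N i0 j0 = -d := by simp [hNdef, hv0, hw0, hMd0]
  have hBq0 : B (EuclideanSpace.single i0 (-1:ℝ), EuclideanSpace.single j0 (1:ℝ)) = d := by
    rw [hBdef]
    have h1 : ∀ i j, N i j * ((EuclideanSpace.single i0 (-1:ℝ)) i * (EuclideanSpace.single j0 (1:ℝ)) j)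
        = if i = i0 then (if j = j0 then d else 0) else 0 := by
      intro i j
      rw [EuclideanSpace.single_apply, EuclideanSpace.single_apply]
      by_cases h : i = i0
      · by_cases h' : j = j0
        · subst h; subst h'; simp [hN00]
        · simp [h, h']
      · simp [h]
    simp_rw [h1]
    have h2 : ∀ i : Fin m, (∑ j, if i = i0 then (if j = j0 then d else 0) else 0)
        = if i = i0 then d else 0 := by
      intro i
      by_cases h : i = i0 <;> simp [h, Finset.sum_ite_eq']
    rw [Finset.sum_congr rfl fun i _ => h2 i]
    simp [Finset.sum_ite_eq']
  have hsd : d ≤ s := hBq0 ▸ hpmax hq0mem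
  have hspos : 0 < s := lt_of_lt_of_le hd0 hsd
  -- row singular-vector identity
  set g : Fin m → ℝ := fun i => ∑ j, N i j * z j with hgdef
  have hrow_eq : ∀ x : EuclideanSpace ℝ (Fin m), B (x, p.2) = ∑ i, x i * g i := by
    intro x
    rw [hBdef]
    exact Finset.sum_congr rfl fun i _ => by
      rw [hgdef, Finset.mul_sum]; exact Finset.sum_congr rfl fun j _ => by ring
  have hBp_row : ∑ i, u i * g i = s := by
    rw [hsdef, ← hrow_eq p.1]
  have hgu : ∀ i, g i = s * u i := by
    apply max_vec g u s hspos hu2 hBp_row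
    intro x hx
    rw [← hrow_eq x]
    exact hpmax ⟨hx, hpK.2⟩
  -- column singular-vector identity
  set gc : Fin n → ℝ := fun j => ∑ i, N i j * u i with hgcdef
  have hcol_eq : ∀ y : EuclideanSpace ℝ (Fin n), B (p.1, y) = ∑ j, y j * gc j := by
    intro y
    simp only [hBdef]
    rw [Finset.sum_comm]
    exact Finset.sum_congr rfl fun j _ => by
      rw [hgcdef, Finset.mul_sum]; exact Finset.sum_congr rfl fun i _ => by ring
  have hBp_col : ∑ j, z j * gc j = s := by
    rw [hsdef, ← hcol_eq p.2]
  have hgz : ∀ j, gc j = s * z j := by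
    apply max_vec gc z s hspos hz2 hBp_col
    intro y hy
    rw [← hcol_eq y]
    exact hpmax ⟨hpK.1, hy⟩
  -- supports of u and z
  have hu0 : ∀ i, v i = 0 → u i = 0 := by
    intro i hvi
    have hgi : g i = 0 := Finset.sum_eq_zero fun j _ => by simp [hNdef, hvi]
    have h1 := hgu i
    rw [hgi] at h1
    exact ((mul_eq_zero.mp h1.symm).resolve_left hspos.ne').symm ▸ rfl
  have hz0 : ∀ j, w j = 0 → z j = 0 := by
    intro j hwj
    have hgj : gc j = 0 := Finset.sum_eq_zero fun i _ => by simp [hNdef, hwj]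
    have h1 := hgz j
    rw [hgj] at h1
    exact ((mul_eq_zero.mp h1.symm).resolve_left hspos.ne').symm ▸ rfl
  -- orthogonality
  set pv : ℝ := ∑ i, v i * u i with hpvdef
  set q : ℝ := ∑ j, w j * z j with hqdef
  have e1 : W * pv = s * q := by
    calc W * pv = ∑ i, u i * (W * v i) := by
          rw [hpvdef, Finset.mul_sum]; exact Finset.sum_congr rfl fun i _ => by ring
    _ = ∑ i, u i * (∑ j, N i j * w j) := (Finset.sum_congr rfl fun i _ => by rw [hN1 i]).symm
    _ = ∑ j, w j * (∑ i, N i j * u i) := by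
          simp_rw [Finset.mul_sum]
          rw [Finset.sum_comm]
          exact Finset.sum_congr rfl fun j _ => Finset.sum_congr rfl fun i _ => by ring
    _ = ∑ j, w j * (s * z j) := Finset.sum_congr rfl fun j _ => by rw [← hgz j]
    _ = s * q := by rw [hqdef, Finset.mul_sum]; exact Finset.sum_congr rfl fun j _ => by ring
  have e2 : V * q = s * pv := by
    calc V * q = ∑ j, z j * (V * w j) := by
          rw [hqdef, Finset.mul_sum]; exact Finset.sum_congr rfl fun j _ => by ring
    _ = ∑ j, z j * (∑ i, N i j * v i) := (Finset.sum_congr rfl fun j _ => by rw [hN2 j]).symm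
    _ = ∑ i, v i * (∑ j, N i j * z j) := by
          simp_rw [Finset.mul_sum]
          rw [Finset.sum_comm]
          exact Finset.sum_congr rfl fun i _ => Finset.sum_congr rfl fun j _ => by ring
    _ = ∑ i, v i * (s * u i) := Finset.sum_congr rfl fun i _ => by rw [← hgu i]
    _ = s * pv := by rw [hpvdef, Finset.mul_sum]; exact Finset.sum_congr rfl fun i _ => by ring
  have hs2 : V * W < s ^ 2 := lt_of_lt_of_le hVWd (by nlinarith only [hsd, hd0])
  have hpv0 : pv = 0 := by
    by_contra hne
    have h1 : (V * W) * pv = s ^ 2 * pv := by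
      calc (V * W) * pv = V * (W * pv) := by ring
      _ = V * (s * q) := by rw [e1]
      _ = s * (V * q) := by ring
      _ = s * (s * pv) := by rw [e2]
      _ = s ^ 2 * pv := by ring
    exact absurd (mul_right_cancel₀ hne h1) (ne_of_lt hs2)
  have hq0 : q = 0 := by
    have h2 : s * q = 0 := by rw [← e1, hpv0]; ring
    exact (mul_eq_zero.mp h2).resolve_left hspos.ne'
  -- perturbation setup
  set α : ℝ := Real.sqrt V with hαdef
  set β : ℝ := Real.sqrt W with hβdef
  set σ : ℝ := Real.sqrt (V * W) with hσdef
  have hα2 : α ^ 2 = V := Real.sq_sqrt hVpos.le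
  have hβ2 : β ^ 2 = W := Real.sq_sqrt hWpos.le
  have hσ2 : σ ^ 2 = V * W := Real.sq_sqrt (by positivity)
  have hαpos : 0 < α := Real.sqrt_pos.mpr hVpos
  have hβpos : 0 < β := Real.sqrt_pos.mpr hWpos
  have hσpos : 0 < σ := Real.sqrt_pos.mpr (mul_pos hVpos hWpos)
  have hαβ : α * β = σ := by rw [hαdef, hβdef, hσdef, ← Real.sqrt_mul hVpos.le]
  have hσs : σ < s := by
    have h1 : σ ^ 2 < s ^ 2 := by rw [hσ2]; exact hs2
    exact lt_of_pow_lt_pow_left₀ 2 hspos.le h1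
  have hui : ∀ i, u i ^ 2 ≤ 1 := by
    intro i
    rw [← hu2]
    exact Finset.single_le_sum (f := fun i => u i ^ 2) (fun i _ => sq_nonneg _) (mem_univ i)
  have hzj : ∀ j, z j ^ 2 ≤ 1 := by
    intro j
    rw [← hz2]
    exact Finset.single_le_sum (f := fun j => z j ^ 2) (fun j _ => sq_nonneg _) (mem_univ j)
  set cv : ℝ := (Finset.univ : Finset (Fin m)).inf' (show (Finset.univ : Finset (Fin m)).Nonempty from ⟨i0, mem_univ i0⟩)
    (fun i => if 0 < v i then v i else 1) with hcvdef
  have hcvpos : 0 < cv := by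
    rw [hcvdef, Finset.lt_inf'_iff]
    intro i _
    by_cases h : 0 < v i
    · simpa [h] using h
    · simp [h]
  have hcvle : ∀ i, 0 < v i → cv ≤ v i := by
    intro i h
    have h1 : cv ≤ if 0 < v i then v i else 1 :=
      Finset.inf'_le (fun i => if 0 < v i then v i else 1) (mem_univ i)
    rw [if_pos h] at h1
    exact h1
  set cw : ℝ := (Finset.univ : Finset (Fin n)).inf' (show (Finset.univ : Finset (Fin n)).Nonempty from ⟨j0, mem_univ j0⟩)
    (fun j => if 0 < w j then w j else 1) with hcwdef
  have hcwpos : 0 < cw := by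
    rw [hcwdef, Finset.lt_inf'_iff]
    intro j _
    by_cases h : 0 < w j
    · simpa [h] using h
    · simp [h]
  have hcwle : ∀ j, 0 < w j → cw ≤ w j := by
    intro j h
    have h1 : cw ≤ if 0 < w j then w j else 1 :=
      Finset.inf'_le (fun j => if 0 < w j then w j else 1) (mem_univ j)
    rw [if_pos h] at h1
    exact h1
  set ε : ℝ := min (min (Real.sqrt ((s - σ) / σ)) (cv / α)) (cw / β) with hεdef
  have hεpos : 0 < ε := lt_min (lt_min
    (Real.sqrt_pos.mpr (div_pos (sub_pos.mpr hσs) hσpos)) (div_pos hcvpos hαpos))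
    (div_pos hcwpos hβpos)
  have hεa : ε ^ 2 ≤ (s - σ) / σ := by
    have h1 : ε ≤ Real.sqrt ((s - σ) / σ) := le_trans (min_le_left _ _) (min_le_left _ _)
    calc ε ^ 2 ≤ (Real.sqrt ((s - σ) / σ)) ^ 2 := pow_le_pow_left₀ hεpos.le h1 2
    _ = (s - σ) / σ := Real.sq_sqrt (div_nonneg (sub_nonneg.mpr hσs.le) hσpos.le)
  have hεv : ε * α ≤ cv := by
    have h1 : ε ≤ cv / α := le_trans (min_le_left _ _) (min_le_right _ _)
    calc ε * α ≤ (cv / α) * α := mul_le_mul_of_nonneg_right h1 hαpos.le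
    _ = cv := by field_simp
  have hεw : ε * β ≤ cw := by
    have h1 : ε ≤ cw / β := min_le_right _ _
    calc ε * β ≤ (cw / β) * β := mul_le_mul_of_nonneg_right h1 hβpos.le
    _ = cw := by field_simp
  set x' : Fin m → ℝ := fun i => v i + ε * α * u i with hx'def
  set y' : Fin n → ℝ := fun j => w j + ε * β * z j with hy'def
  have hx'nn : ∀ i, 0 ≤ x' i := by
    intro i
    show 0 ≤ v i + ε * α * u i
    by_cases h : 0 < v i
    · have h1 : -1 ≤ u i := by nlinarith only [hui i, sq_nonneg (u i + 1)]
      have h2 : (0:ℝ) ≤ ε * α := by positivity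
      have h3 := mul_le_mul_of_nonneg_left h1 h2
      have h4 := hcvle i h
      linarith only [h3, h4, hεv]
    · rw [hvz i h, hu0 i (hvz i h)]; norm_num
  have hy'nn : ∀ j, 0 ≤ y' j := by
    intro j
    show 0 ≤ w j + ε * β * z j
    by_cases h : 0 < w j
    · have h1 : -1 ≤ z j := by nlinarith only [hzj j, sq_nonneg (z j + 1)]
      have h2 : (0:ℝ) ≤ ε * β := by positivity
      have h3 := mul_le_mul_of_nonneg_left h1 h2
      have h4 := hcwle j h
      linarith only [h3, h4, hεw]
    · rw [hwz j h, hz0 j (hwz j h)]; norm_num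
  -- key sums
  have S0 : ∑ i, ∑ j, Md i j * (v i * w j) = V * W := by
    rw [← hN3]
    refine Finset.sum_congr rfl fun i _ => Finset.sum_congr rfl fun j _ => ?_
    by_cases h1 : 0 < v i
    · by_cases h2 : 0 < w j
      · simp [hNdef, h1, h2]
      · rw [hwz j h2]; simp
    · rw [hvz i h1]; simp
  have S1 : ∑ i, ∑ j, Md i j * (u i * w j) = 0 := by
    have hNeq : ∑ i, ∑ j, Md i j * (u i * w j) = ∑ i, ∑ j, N i j * (u i * w j) := by
      refine Finset.sum_congr rfl fun i _ => Finset.sum_congr rfl fun j _ => ?_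
      by_cases h1 : 0 < v i
      · by_cases h2 : 0 < w j
        · simp [hNdef, h1, h2]
        · rw [hwz j h2]; simp
      · rw [hu0 i (hvz i h1)]; simp
    rw [hNeq, Finset.sum_comm]
    calc ∑ j, ∑ i, N i j * (u i * w j) = ∑ j, w j * (∑ i, N i j * u i) := by
          refine Finset.sum_congr rfl fun j _ => ?_
          rw [Finset.mul_sum]; exact Finset.sum_congr rfl fun i _ => by ring
    _ = ∑ j, w j * (s * z j) := Finset.sum_congr rfl fun j _ => by rw [← hgz j]
    _ = s * q := by rw [hqdef, Finset.mul_sum]; exact Finset.sum_congr rfl fun j _ => by ring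
    _ = 0 := by rw [hq0]; ring
  have S2 : ∑ i, ∑ j, Md i j * (v i * z j) = 0 := by
    have hNeq : ∑ i, ∑ j, Md i j * (v i * z j) = ∑ i, ∑ j, N i j * (v i * z j) := by
      refine Finset.sum_congr rfl fun i _ => Finset.sum_congr rfl fun j _ => ?_
      by_cases h1 : 0 < v i
      · by_cases h2 : 0 < w j
        · simp [hNdef, h1, h2]
        · rw [hz0 j (hwz j h2)]; simp
      · rw [hvz i h1]; simp
    rw [hNeq]
    calc ∑ i, ∑ j, N i j * (v i * z j) = ∑ i, v i * (∑ j, N i j * z j) := by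
          refine Finset.sum_congr rfl fun i _ => ?_
          rw [Finset.mul_sum]; exact Finset.sum_congr rfl fun j _ => by ring
    _ = ∑ i, v i * (s * u i) := Finset.sum_congr rfl fun i _ => by rw [← hgu i]
    _ = s * pv := by rw [hpvdef, Finset.mul_sum]; exact Finset.sum_congr rfl fun i _ => by ring
    _ = 0 := by rw [hpv0]; ring
  have S3 : ∑ i, ∑ j, Md i j * (u i * z j) = s := by
    have hNeq : ∑ i, ∑ j, Md i j * (u i * z j) = ∑ i, ∑ j, N i j * (u i * z j) := by
      refine Finset.sum_congr rfl fun i _ => Finset.sum_congr rfl fun j _ => ?_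
      by_cases h1 : 0 < v i
      · by_cases h2 : 0 < w j
        · simp [hNdef, h1, h2]
        · rw [hz0 j (hwz j h2)]; simp
      · rw [hu0 i (hvz i h1)]; simp
    rw [hNeq]
  have Sx : ∑ i, (x' i) ^ 2 = V + ε ^ 2 * V := by
    have h1 : ∀ i, (x' i) ^ 2 = (v i) ^ 2 + (2 * (ε * α)) * (v i * u i) + (ε * α) ^ 2 * (u i) ^ 2 := by
      intro i; show (v i + ε * α * u i) ^ 2 = _; ring
    rw [Finset.sum_congr rfl fun i _ => h1 i]
    rw [Finset.sum_add_distrib, Finset.sum_add_distrib, ← Finset.mul_sum, ← Finset.mul_sum,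
      ← hV, ← hpvdef, hpv0, hu2]
    have h2 : (ε * α) ^ 2 = ε ^ 2 * V := by rw [mul_pow, hα2]
    rw [h2]; ring
  have Sy : ∑ j, (y' j) ^ 2 = W + ε ^ 2 * W := by
    have h1 : ∀ j, (y' j) ^ 2 = (w j) ^ 2 + (2 * (ε * β)) * (w j * z j) + (ε * β) ^ 2 * (z j) ^ 2 := by
      intro j; show (w j + ε * β * z j) ^ 2 = _; ring
    rw [Finset.sum_congr rfl fun j _ => h1 j]
    rw [Finset.sum_add_distrib, Finset.sum_add_distrib, ← Finset.mul_sum, ← Finset.mul_sum,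
      ← hW, ← hqdef, hq0, hz2]
    have h2 : (ε * β) ^ 2 = ε ^ 2 * W := by rw [mul_pow, hβ2]
    rw [h2]; ring
  have T : ∑ i, ∑ j, Md i j * (x' i * y' j) = V * W + ε ^ 2 * (σ * s) := by
    calc ∑ i, ∑ j, Md i j * (x' i * y' j)
        = ∑ i, ∑ j, (Md i j * (v i * w j) + (ε * α) * (Md i j * (u i * w j))
            + (ε * β) * (Md i j * (v i * z j))
            + (ε * α) * ((ε * β) * (Md i j * (u i * z j)))) := by
          refine Finset.sum_congr rfl fun i _ => Finset.sum_congr rfl fun j _ => ?_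
          show Md i j * ((v i + ε * α * u i) * (w j + ε * β * z j)) = _
          ring
    _ = (∑ i, ∑ j, Md i j * (v i * w j)) + (ε * α) * (∑ i, ∑ j, Md i j * (u i * w j))
          + (ε * β) * (∑ i, ∑ j, Md i j * (v i * z j))
          + (ε * α) * ((ε * β) * (∑ i, ∑ j, Md i j * (u i * z j))) := by
          simp_rw [Finset.sum_add_distrib, ← Finset.mul_sum]
    _ = V * W + ε ^ 2 * ((α * β) * s) := by rw [S0, S1, S2, S3]; ring
    _ = V * W + ε ^ 2 * (σ * s) := by rw [hαβ]
  -- the contradiction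
  have hineq := hopt x' y' hx'nn hy'nn
  rw [expand_f Md v w, expand_f Md x' y', S0, T, Sx, Sy, ← hV, ← hW] at hineq
  have h6 : 0 ≤ -2 * (ε ^ 2 * (σ * s)) + (V * W) * (2 * ε ^ 2 + ε ^ 4) := by
    have e : (V + ε ^ 2 * V) * (W + ε ^ 2 * W) - V * W = (V * W) * (2 * ε ^ 2 + ε ^ 4) := by ring
    linarith only [hineq, e]
  have hA : ε ^ 2 * σ ≤ s - σ := by
    have h1 := mul_le_mul_of_nonneg_right hεa hσpos.le
    rwa [div_mul_cancel₀ _ hσpos.ne'] at h1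
  have hB : 0 < ε ^ 2 * σ := by positivity
  rw [← hσ2] at h6
  linarith only [h6, mul_le_mul_of_nonneg_left hA hB.le, mul_lt_mul_of_pos_left hσs hB]
lemma col_reduce {m n : ℕ} (Md : Fin m → Fin n → ℝ) (v : Fin m → ℝ) (w : Fin n → ℝ)
    (hv : ∀ i, 0 ≤ v i) (hw : ∀ j, 0 ≤ w j)
    (hopt : ∀ (v' : Fin m → ℝ) (w' : Fin n → ℝ), (∀ i, 0 ≤ v' i) → (∀ j, 0 ≤ w' j) →
      ∑ i, ∑ j, (Md i j - v i * w j) ^ 2 ≤ ∑ i, ∑ j, (Md i j - v' i * w' j) ^ 2)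
    (j : Fin n) (t : ℝ) (ht : 0 ≤ t) :
    ∑ i, (Md i j - v i * w j) ^ 2 ≤ ∑ i, (Md i j - v i * t) ^ 2 := by
  have e1 : ∀ (a : Fin m → ℝ) (b : Fin n → ℝ),
      (∑ j', ∑ i', (Md i' j' - b j' * a i') ^ 2) = ∑ i', ∑ j', (Md i' j' - a i' * b j') ^ 2 := by
    intro a b
    rw [Finset.sum_comm]
    exact Finset.sum_congr rfl fun i' _ => Finset.sum_congr rfl fun j' _ => by ring
  have h := row_reduce (fun j' i' => Md i' j') w v hw hv ?_ j t ht
  · calc ∑ i, (Md i j - v i * w j) ^ 2 = ∑ i, ((fun j' i' => Md i' j') j i - w j * v i) ^ 2 :=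
          Finset.sum_congr rfl fun i _ => by ring
    _ ≤ ∑ i, ((fun j' i' => Md i' j') j i - t * v i) ^ 2 := h
    _ = ∑ i, (Md i j - v i * t) ^ 2 := Finset.sum_congr rfl fun i _ => by ring
  · intro w' v' hw' hv'
    have h2 := hopt v' w' hv' hw'
    calc ∑ j', ∑ i', ((fun j' i' => Md i' j') j' i' - w j' * v i') ^ 2
        = ∑ i', ∑ j', (Md i' j' - v i' * w j') ^ 2 := e1 v w
    _ ≤ ∑ i', ∑ j', (Md i' j' - v' i' * w' j') ^ 2 := h2
    _ = ∑ j', ∑ i', ((fun j' i' => Md i' j') j' i' - w' j' * v' i') ^ 2 := (e1 v' w').symm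

/-- For d ≥ √|E|, any optimal solution (v,w) of the rank-one nonnegative
factorization of M_d = (1+d)M_b - d·J has vwᵀ binary with vwᵀ ≤ M_b entrywise. -/
theorem stmt_2 (m n : ℕ) (Mb : Fin m → Fin n → ℝ)
    (hbin : ∀ i j, Mb i j = 0 ∨ Mb i j = 1)
    (d : ℝ) (hd0 : 0 < d)
    (Md : Fin m → Fin n → ℝ) (hMd : ∀ i j, Md i j = (1 + d) * Mb i j - d)
    (hdE : Real.sqrt (∑ i, ∑ j, Mb i j) ≤ d)
    (v : Fin m → ℝ) (w : Fin n → ℝ) (hv : ∀ i, 0 ≤ v i) (hw : ∀ j, 0 ≤ w j)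
    (hopt : ∀ (v' : Fin m → ℝ) (w' : Fin n → ℝ), (∀ i, 0 ≤ v' i) → (∀ j, 0 ≤ w' j) →
      ∑ i, ∑ j, (Md i j - v i * w j) ^ 2 ≤ ∑ i, ∑ j, (Md i j - v' i * w' j) ^ 2) :
    ∀ i j, (v i * w j = 0 ∨ v i * w j = 1) ∧ v i * w j ≤ Mb i j := by
  classical
  have hMbnn : ∀ i j, (0:ℝ) ≤ Mb i j := by
    intro i j; rcases hbin i j with h | h <;> rw [h] <;> norm_num
  have hvz : ∀ i, ¬ 0 < v i → v i = 0 := fun i h => le_antisymm (not_lt.mp h) (hv i)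
  have hwz : ∀ j, ¬ 0 < w j → w j = 0 := fun j h => le_antisymm (not_lt.mp h) (hw j)
  intro i j
  by_cases hvi : 0 < v i
  · by_cases hwj : 0 < w j
    · -- positive case
      set V : ℝ := ∑ i', (v i') ^ 2 with hV
      set W : ℝ := ∑ j', (w j') ^ 2 with hW
      have hVpos : 0 < V := by
        rw [hV]
        calc (0:ℝ) < v i ^ 2 := by positivity
        _ ≤ _ := Finset.single_le_sum (f := fun i' => v i' ^ 2) (fun i' _ => sq_nonneg _)
            (Finset.mem_univ i)
      have hWpos : 0 < W := by
        rw [hW]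
        calc (0:ℝ) < w j ^ 2 := by positivity
        _ ≤ _ := Finset.single_le_sum (f := fun j' => w j' ^ 2) (fun j' _ => sq_nonneg _)
            (Finset.mem_univ j)
      have hstatv : ∀ i', 0 < v i' → ∑ j', Md i' j' * w j' = W * v i' := by
        intro i' hvi'
        apply quad_min hWpos hvi'
        intro t ht
        have h := row_reduce Md v w hv hw hopt i' t ht
        rw [expand_row (Md i') w (v i'), expand_row (Md i') w t] at h
        linarith only [h]
      have hstatw : ∀ j', 0 < w j' → ∑ i', Md i' j' * v i' = V * w j' := by
        intro j' hwj'
        apply quad_min hVpos hwj'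
        intro t ht
        have h := col_reduce Md v w hv hw hopt j' t ht
        have e2 : ∀ t', (∑ i', (Md i' j' - v i' * t') ^ 2) = ∑ i', (Md i' j' - t' * v i') ^ 2 :=
          fun t' => Finset.sum_congr rfl fun i' _ => by ring
        rw [e2 (w j'), e2 t, expand_row (fun i' => Md i' j') v (w j'),
          expand_row (fun i' => Md i' j') v t] at h
        linarith only [h]
      have claim1 : ∀ i' j', 0 < v i' → 0 < w j' → Mb i' j' = 1 := by
        intro i' j' h1 h2
        by_contra hne
        exact crux Mb hbin d hd0 Md hMd hdE v w hv hw hopt V W hV hW hstatv hstatw i' j' h1 h2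
          ((hbin i' j').resolve_right hne)
      have hMb1 : Mb i j = 1 := claim1 i j hvi hwj
      have hrow : ∀ i', 0 < v i' → W * v i' = ∑ j', w j' := by
        intro i' h1
        rw [← hstatv i' h1]
        refine Finset.sum_congr rfl fun j' _ => ?_
        by_cases h2 : 0 < w j'
        · rw [hMd, claim1 i' j' h1 h2]; ring
        · rw [hwz j' h2]; simp
      have hcol : ∀ j', 0 < w j' → V * w j' = ∑ i', v i' := by
        intro j' h2
        rw [← hstatw j' h2]
        refine Finset.sum_congr rfl fun i' _ => ?_
        by_cases h1 : 0 < v i'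
        · rw [hMd, claim1 i' j' h1 h2]; ring
        · rw [hvz i' h1]; simp
      have hVW : V * W = (∑ i', v i') * (∑ j', w j') := by
        have h1 : V * W = ∑ i', v i' * (W * v i') := by
          rw [hV, Finset.sum_mul]; exact Finset.sum_congr rfl fun i' _ => by ring
        have h2 : ∀ i', v i' * (W * v i') = v i' * (∑ j', w j') := by
          intro i'
          by_cases h : 0 < v i'
          · rw [hrow i' h]
          · rw [hvz i' h]; ring
        rw [h1, Finset.sum_congr rfl fun i' _ => h2 i', ← Finset.sum_mul]
      have e3 : (W * v i) * (V * w j) = V * W := by rw [hrow i hvi, hcol j hwj, hVW]; ring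
      have hVWpos : 0 < V * W := mul_pos hVpos hWpos
      have hprod : v i * w j = 1 := by
        have h4 : (V * W) * (v i * w j) = (V * W) * 1 := by
          calc (V * W) * (v i * w j) = (W * v i) * (V * w j) := by ring
          _ = V * W := e3
          _ = (V * W) * 1 := by ring
        exact mul_left_cancel₀ hVWpos.ne' h4
      exact ⟨Or.inr hprod, by rw [hprod, hMb1]⟩
    · have h0 : w j = 0 := hwz j hwj
      constructor
      · left; rw [h0]; ring
      · rw [h0, mul_zero]; exact hMbnn i j
  · have h0 : v i = 0 := hvz i hvi
    constructor
    · left; rw [h0]; ring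
    · rw [h0, zero_mul]; exact hMbnn i j
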